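/- Let Λ be a compact metric space, C ≥ 2, and (K_n) a sequence of transition kernels on Λ converging uniformly (in W₁) to a kernel K, such that for each n there exists a probability measure λ_n with 1/C ≤ dK_n(x,·)/dλ_n ≤ C for all x ∈ Λ. Then there exists a probability measure λ such that K(x,·) is absolutely continuous with respect to λ with density taking values in [1/C, C] for all x ∈ Λ; i.e., the Doeblin-type class Ω_ω^C is closed. -/

import Mathlib

open MeasureTheory Filter

/-- The Wasserstein-1 distance between two measures, defined through couplings. -/
noncomputable def W1 {α : Type*} [MeasurableSpace α] [PseudoMetricSpace α]
    (μ ν : Measure α) : ℝ :=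
  sInf {c | ∃ π : Measure (α × α),
    π.map Prod.fst = μ ∧ π.map Prod.snd = ν ∧ c = ∫ p, dist p.1 p.2 ∂π}

open Metric Set BoundedContinuousFunction TopologicalSpace EMetric
open scoped NNReal ENNReal Topology

set_option linter.unusedSectionVars false
namespace Stmt14Aux

variable {Ω : Type*} [MetricSpace Ω] [CompactSpace Ω] [MeasurableSpace Ω] [BorelSpace Ω]

def couplings (μ ν : Measure Ω) : Set ℝ :=
  {c | ∃ π : Measure (Ω × Ω),
    π.map Prod.fst = μ ∧ π.map Prod.snd = ν ∧ c = ∫ p, dist p.1 p.2 ∂π}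

lemma W1_eq (μ ν : Measure Ω) : W1 μ ν = sInf (couplings μ ν) := rfl

lemma coupling_prob {π : Measure (Ω × Ω)} {μ : Measure Ω} [IsProbabilityMeasure μ]
    (h : π.map Prod.fst = μ) : IsProbabilityMeasure π := by
  have h3 := congrArg (fun m : Measure Ω => m Set.univ) h
  simp only [Measure.map_apply measurable_fst MeasurableSet.univ, Set.preimage_univ,
    measure_univ] at h3
  exact ⟨h3⟩

lemma dist_integrable (π : Measure (Ω × Ω)) [IsProbabilityMeasure π] :
    Integrable (fun p : Ω × Ω => dist p.1 p.2) π :=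
  (BoundedContinuousFunction.integrable π
    (mkOfCompact ⟨fun p : Ω × Ω => dist p.1 p.2, continuous_dist⟩))

lemma couplings_nonempty (μ ν : Measure Ω) [IsProbabilityMeasure μ] [IsProbabilityMeasure ν] :
    (couplings μ ν).Nonempty := by
  refine ⟨∫ p, dist p.1 p.2 ∂(μ.prod ν), ⟨μ.prod ν, ?_, ?_, rfl⟩⟩
  · simp [Measure.map_fst_prod]
  · simp [Measure.map_snd_prod]

lemma couplings_bddBelow (μ ν : Measure Ω) : BddBelow (couplings μ ν) := by
  refine ⟨0, fun c hc => ?_⟩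
  obtain ⟨π, -, -, rfl⟩ := hc
  exact integral_nonneg fun p => dist_nonneg

lemma W1_le_diam (μ ν : Measure Ω) [IsProbabilityMeasure μ] [IsProbabilityMeasure ν] :
    W1 μ ν ≤ Metric.diam (Set.univ : Set Ω) := by
  rw [W1_eq]
  refine csInf_le_of_le (couplings_bddBelow μ ν) ⟨μ.prod ν, by simp [Measure.map_fst_prod],
    by simp [Measure.map_snd_prod], rfl⟩ ?_
  calc ∫ p, dist p.1 p.2 ∂(μ.prod ν) ≤ ∫ _p, Metric.diam (Set.univ : Set Ω) ∂(μ.prod ν) := by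
        refine integral_mono (dist_integrable _) (integrable_const _) fun p => ?_
        exact dist_le_diam_of_mem isCompact_univ.isBounded trivial trivial
    _ = Metric.diam (Set.univ : Set Ω) := by simp

/-- Key coupling estimate: if `W1 μ ν < η` then lintegrals of an `L`-Lipschitz-type
`ℝ≥0∞`-valued function differ by at most `L * η`, in both directions. -/
lemma lintegral_le_of_W1_lt {μ ν : Measure Ω} [IsProbabilityMeasure μ] [IsProbabilityMeasure ν]
    {η : ℝ} (hW : W1 μ ν < η) {f : Ω → ℝ≥0∞} (hf : Measurable f) {L : ℝ≥0∞}
    (hLip : ∀ a b, f a ≤ f b + L * edist a b) :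
    (∫⁻ x, f x ∂μ ≤ ∫⁻ x, f x ∂ν + L * ENNReal.ofReal η) ∧
    (∫⁻ x, f x ∂ν ≤ ∫⁻ x, f x ∂μ + L * ENNReal.ofReal η) := by
  rw [W1_eq] at hW
  obtain ⟨c, hc, hcη⟩ := (csInf_lt_iff (couplings_bddBelow μ ν) (couplings_nonempty μ ν)).mp hW
  obtain ⟨π, h1, h2, rfl⟩ := hc
  haveI : IsProbabilityMeasure π := coupling_prob h1
  have hedm : Measurable (fun p : Ω × Ω => edist p.1 p.2) := continuous_edist.measurable
  have hed : ∫⁻ p, edist p.1 p.2 ∂π ≤ ENNReal.ofReal η := by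
    have heq : ENNReal.ofReal (∫ p, dist p.1 p.2 ∂π) = ∫⁻ p, edist p.1 p.2 ∂π := by
      rw [ofReal_integral_eq_lintegral_ofReal (dist_integrable π)
        (Eventually.of_forall fun p => dist_nonneg)]
      simp_rw [edist_dist]
    rw [← heq]
    exact ENNReal.ofReal_le_ofReal hcη.le
  constructor
  · calc ∫⁻ x, f x ∂μ = ∫⁻ p, f p.1 ∂π := by rw [← h1, lintegral_map hf measurable_fst]
      _ ≤ ∫⁻ p, f p.2 + L * edist p.1 p.2 ∂π := lintegral_mono fun p => hLip p.1 p.2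
      _ = ∫⁻ p, f p.2 ∂π + L * ∫⁻ p, edist p.1 p.2 ∂π := by
          rw [lintegral_add_right _ (hedm.const_mul L), lintegral_const_mul _ hedm]
      _ ≤ ∫⁻ x, f x ∂ν + L * ENNReal.ofReal η := by
          rw [← h2, lintegral_map hf measurable_snd]
          exact add_le_add_right (mul_le_mul_right hed L) _
  · calc ∫⁻ x, f x ∂ν = ∫⁻ p, f p.2 ∂π := by rw [← h2, lintegral_map hf measurable_snd]
      _ ≤ ∫⁻ p, f p.1 + L * edist p.1 p.2 ∂π := by
          refine lintegral_mono fun p => ?_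
          simpa [edist_comm] using hLip p.2 p.1
      _ = ∫⁻ p, f p.1 ∂π + L * ∫⁻ p, edist p.1 p.2 ∂π := by
          rw [lintegral_add_right _ (hedm.const_mul L), lintegral_const_mul _ hedm]
      _ ≤ ∫⁻ x, f x ∂μ + L * ENNReal.ofReal η := by
          rw [← h1, lintegral_map hf measurable_fst]
          exact add_le_add_right (mul_le_mul_right hed L) _

lemma thAux_lip {δ : ℝ} (E : Set Ω) (a b : Ω) :
    thickenedIndicatorAux δ E a ≤
      thickenedIndicatorAux δ E b + (ENNReal.ofReal δ)⁻¹ * edist a b := by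
  have h1 : infEdist b E / ENNReal.ofReal δ ≤
      infEdist a E / ENNReal.ofReal δ + edist a b / ENNReal.ofReal δ := by
    rw [← ENNReal.add_div]
    refine ENNReal.div_le_div_right ?_ _
    calc infEdist b E ≤ infEdist a E + edist b a := infEdist_le_infEdist_add_edist
      _ = infEdist a E + edist a b := by rw [edist_comm]
  unfold thickenedIndicatorAux
  calc (1 : ℝ≥0∞) - infEdist a E / ENNReal.ofReal δ
      ≤ 1 - (infEdist b E / ENNReal.ofReal δ - edist a b / ENNReal.ofReal δ) :=
        tsub_le_tsub_left (tsub_le_iff_right.mpr h1) 1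
    _ ≤ (1 - infEdist b E / ENNReal.ofReal δ) + edist a b / ENNReal.ofReal δ :=
        tsub_tsub_le_tsub_add
    _ = (1 - infEdist b E / ENNReal.ofReal δ) + (ENNReal.ofReal δ)⁻¹ * edist a b := by
        congr 1
        exact ENNReal.div_eq_inv_mul

lemma measure_le_lintegral_thAux (μ : Measure Ω) (δ : ℝ) {E : Set Ω} (hE : MeasurableSet E) :
    μ E ≤ ∫⁻ x, thickenedIndicatorAux δ E x ∂μ := by
  rw [← lintegral_indicator_one hE]
  exact lintegral_mono (indicator_le_thickenedIndicatorAux δ E)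

lemma lintegral_thAux_le_measure (μ : Measure Ω) {δ : ℝ} (hδ : 0 < δ) (E : Set Ω) :
    ∫⁻ x, thickenedIndicatorAux δ E x ∂μ ≤ μ (thickening δ E) := by
  rw [← lintegral_indicator_one isOpen_thickening.measurableSet]
  refine lintegral_mono fun x => ?_
  by_cases hx : x ∈ thickening δ E
  · simpa [indicator_of_mem hx] using thickenedIndicatorAux_le_one δ E x
  · simp [indicator_of_notMem hx, thickenedIndicatorAux_zero hδ E hx]

lemma coe_thickenedIndicator {δ : ℝ} (hδ : 0 < δ) (E : Set Ω) (x : Ω) :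
    ((thickenedIndicator hδ E x : ℝ≥0) : ℝ≥0∞) = thickenedIndicatorAux δ E x := by
  rw [thickenedIndicator.coeFn_eq_comp]
  exact ENNReal.coe_toNNReal thickenedIndicatorAux_lt_top.ne

lemma lintegral_le_nnnorm (μ : Measure Ω) [IsProbabilityMeasure μ] (f : Ω →ᵇ ℝ≥0) :
    ∫⁻ x, (f x : ℝ≥0∞) ∂μ ≤ ((nndist 0 f : ℝ≥0) : ℝ≥0∞) := by
  calc ∫⁻ x, (f x : ℝ≥0∞) ∂μ ≤ ∫⁻ _x, ((nndist 0 f : ℝ≥0) : ℝ≥0∞) ∂μ := by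
        refine lintegral_mono fun x => ENNReal.coe_le_coe.mpr ?_
        exact f.apply_le_nndist_zero x
    _ = ((nndist 0 f : ℝ≥0) : ℝ≥0∞) := by simp

lemma lintegral_le_add_nndist (μ : Measure Ω) [IsProbabilityMeasure μ] (f g : Ω →ᵇ ℝ≥0) :
    ∫⁻ x, (f x : ℝ≥0∞) ∂μ ≤ (∫⁻ x, (g x : ℝ≥0∞) ∂μ) + (nndist f g : ℝ≥0∞) := by
  calc ∫⁻ x, (f x : ℝ≥0∞) ∂μ ≤ ∫⁻ x, ((g x : ℝ≥0∞) + (nndist f g : ℝ≥0∞)) ∂μ := by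
        refine lintegral_mono fun x => ?_
        rw [← ENNReal.coe_add]
        refine ENNReal.coe_le_coe.mpr ?_
        calc f x ≤ g x + nndist (f x) (g x) := NNReal.le_add_nndist _ _
          _ ≤ g x + nndist f g := add_le_add_right (nndist_coe_le_nndist x) _
    _ = (∫⁻ x, (g x : ℝ≥0∞) ∂μ) + (nndist f g : ℝ≥0∞) := by
        rw [lintegral_add_right _ measurable_const, lintegral_const, measure_univ, mul_one]

lemma dist_toReal_lintegral_le (μ : Measure Ω) [IsProbabilityMeasure μ] (f g : Ω →ᵇ ℝ≥0) :
    dist (∫⁻ x, (f x : ℝ≥0∞) ∂μ).toReal (∫⁻ x, (g x : ℝ≥0∞) ∂μ).toReal ≤ dist f g := by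
  have hf : ∫⁻ x, (f x : ℝ≥0∞) ∂μ ≠ ⊤ := (f.lintegral_lt_top_of_nnreal μ).ne
  have hg : ∫⁻ x, (g x : ℝ≥0∞) ∂μ ≠ ⊤ := (g.lintegral_lt_top_of_nnreal μ).ne
  have key : ∀ (a b : ℝ≥0∞), a ≠ ⊤ → b ≠ ⊤ → a ≤ b + (nndist f g : ℝ≥0∞) →
      a.toReal - b.toReal ≤ dist f g := by
    intro a b ha hb h
    have h2 : a.toReal ≤ (b + (nndist f g : ℝ≥0∞)).toReal :=
      ENNReal.toReal_mono (ENNReal.add_ne_top.mpr ⟨hb, ENNReal.coe_ne_top⟩) h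
    rw [ENNReal.toReal_add hb ENNReal.coe_ne_top] at h2
    have h3 : ((nndist f g : ℝ≥0) : ℝ≥0∞).toReal = dist f g := by
      rw [ENNReal.coe_toReal, coe_nndist]
    rw [h3] at h2
    linarith
  rw [Real.dist_eq, abs_sub_le_iff]
  have hgf : ∫⁻ x, (g x : ℝ≥0∞) ∂μ ≤ (∫⁻ x, (f x : ℝ≥0∞) ∂μ) + (nndist f g : ℝ≥0∞) := by
    have := lintegral_le_add_nndist μ g f
    rwa [nndist_comm g f] at this
  exact ⟨key _ _ hf hg (lintegral_le_add_nndist μ f g), key _ _ hg hf hgf⟩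

lemma exists_limit_functional (lam : ℕ → Measure Ω) [hp : ∀ n, IsProbabilityMeasure (lam n)]
    [Nonempty Ω] :
    ∃ φ : ℕ → ℕ, StrictMono φ ∧ ∃ I : (Ω →ᵇ ℝ≥0) → ℝ≥0∞,
      ∀ f, Tendsto (fun m => ∫⁻ x, (f x : ℝ≥0∞) ∂ lam (φ m)) atTop (𝓝 (I f)) := by
  haveI : Nonempty C(Ω, ℝ≥0) := ⟨0⟩
  obtain ⟨u, hu⟩ := TopologicalSpace.exists_dense_seq C(Ω, ℝ≥0)
  set e := ContinuousMap.isometryEquivBoundedOfCompact Ω ℝ≥0 with he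
  set g : ℕ → Ω →ᵇ ℝ≥0 := fun k => e (u k) with hgdef
  have hg : DenseRange g := DenseRange.comp e.surjective.denseRange hu e.continuous
  obtain ⟨L, φ, hφ, hL⟩ := CompactSpace.tendsto_subseq
    (X := ℕ → ℝ≥0∞) (fun n k => ∫⁻ x, (g k x : ℝ≥0∞) ∂ lam n)
  have hLk : ∀ k, Tendsto (fun m => ∫⁻ x, (g k x : ℝ≥0∞) ∂ lam (φ m)) atTop (𝓝 (L k)) := by
    intro k
    exact (tendsto_pi_nhds.mp hL) k
  refine ⟨φ, hφ, ?_⟩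
  have hconvall : ∀ f : Ω →ᵇ ℝ≥0, ∃ c : ℝ≥0∞,
      Tendsto (fun m => ∫⁻ x, (f x : ℝ≥0∞) ∂ lam (φ m)) atTop (𝓝 c) := by
    intro f
    set u' : ℕ → ℝ := fun m => (∫⁻ x, (f x : ℝ≥0∞) ∂ lam (φ m)).toReal with hu'
    have hcauchy : CauchySeq u' := by
      rw [Metric.cauchySeq_iff]
      intro ε hε
      obtain ⟨k, hk⟩ := hg.exists_dist_lt f (show (0:ℝ) < ε/4 by linarith)
      have hLfin : L k ≠ ⊤ := by
        refine ne_top_of_le_ne_top (ENNReal.coe_ne_top (r := nndist 0 (g k))) ?_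
        exact le_of_tendsto (hLk k) (Eventually.of_forall fun m => lintegral_le_nnnorm _ _)
      set v' : ℕ → ℝ := fun m => (∫⁻ x, (g k x : ℝ≥0∞) ∂ lam (φ m)).toReal with hv'
      have hv : Tendsto v' atTop (𝓝 (L k).toReal) := (ENNReal.tendsto_toReal hLfin).comp (hLk k)
      obtain ⟨N, hN⟩ := Metric.cauchySeq_iff.mp hv.cauchySeq (ε/4) (by linarith)
      refine ⟨N, fun m hm n hn => ?_⟩
      have h1 : dist (u' m) (v' m) ≤ ε / 4 :=
        le_trans (dist_toReal_lintegral_le (lam (φ m)) f (g k)) hk.le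
      have h2 : dist (v' n) (u' n) ≤ ε / 4 := by
        rw [dist_comm]
        exact le_trans (dist_toReal_lintegral_le (lam (φ n)) f (g k)) hk.le
      calc dist (u' m) (u' n) ≤ dist (u' m) (v' m) + dist (v' m) (v' n) + dist (v' n) (u' n) :=
            dist_triangle4 _ _ _ _
        _ < ε/4 + ε/4 + ε/4 := by
            have := hN m hm n hn
            refine add_lt_add_of_lt_of_le (add_lt_add_of_le_of_lt h1 this) h2
        _ ≤ ε := by linarith
    obtain ⟨r, hr⟩ := cauchySeq_tendsto_of_complete hcauchy
    refine ⟨ENNReal.ofReal r, ?_⟩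
    have heq : (fun m => ∫⁻ x, (f x : ℝ≥0∞) ∂ lam (φ m)) = fun m => ENNReal.ofReal (u' m) := by
      funext m
      rw [hu', ENNReal.ofReal_toReal (f.lintegral_lt_top_of_nnreal _).ne]
    rw [heq]
    exact (ENNReal.continuous_ofReal.tendsto r).comp hr
  choose I hI using hconvall
  exact ⟨I, hI⟩

section BcRiesz
variable {X : Type*} [TopologicalSpace X]

noncomputable def bcRieszContentAux (Λ' : (X →ᵇ ℝ≥0) →ₗ[ℝ≥0] ℝ≥0) : Compacts X → ℝ≥0 := fun K =>
  sInf (Λ' '' { f : X →ᵇ ℝ≥0 | ∀ x ∈ K, (1 : ℝ≥0) ≤ f x })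

theorem bcRieszContentAux_image_nonempty (Λ' : (X →ᵇ ℝ≥0) →ₗ[ℝ≥0] ℝ≥0) (K : Compacts X) :
    (Λ' '' { f : X →ᵇ ℝ≥0 | ∀ x ∈ K, (1 : ℝ≥0) ≤ f x }).Nonempty :=
  ⟨Λ' 1, 1, fun x _ => by simp, rfl⟩

theorem bcRieszContentAux_mono (Λ' : (X →ᵇ ℝ≥0) →ₗ[ℝ≥0] ℝ≥0) {K₁ K₂ : Compacts X}
    (h : K₁ ≤ K₂) : bcRieszContentAux Λ' K₁ ≤ bcRieszContentAux Λ' K₂ :=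
  csInf_le_csInf (OrderBot.bddBelow _) (bcRieszContentAux_image_nonempty Λ' K₂)
    (Set.image_mono (f := Λ') (setOf_subset_setOf.mpr fun _ f_hyp x x_in_K₁ => f_hyp x (h x_in_K₁)))

theorem bcRieszContentAux_le (Λ' : (X →ᵇ ℝ≥0) →ₗ[ℝ≥0] ℝ≥0) {K : Compacts X} {f : X →ᵇ ℝ≥0}
    (h : ∀ x ∈ K, (1 : ℝ≥0) ≤ f x) : bcRieszContentAux Λ' K ≤ Λ' f :=
  csInf_le (OrderBot.bddBelow _) ⟨f, ⟨h, rfl⟩⟩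

theorem bcRieszContentAux_sup_le (Λ' : (X →ᵇ ℝ≥0) →ₗ[ℝ≥0] ℝ≥0) (K1 K2 : Compacts X) :
    bcRieszContentAux Λ' (K1 ⊔ K2) ≤ bcRieszContentAux Λ' K1 + bcRieszContentAux Λ' K2 := by
  have key : ∀ f1 : X →ᵇ ℝ≥0, (∀ x ∈ K1, (1 : ℝ≥0) ≤ f1 x) → ∀ f2 : X →ᵇ ℝ≥0,
      (∀ x ∈ K2, (1 : ℝ≥0) ≤ f2 x) → bcRieszContentAux Λ' (K1 ⊔ K2) ≤ Λ' f1 + Λ' f2 := by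
    intro f1 h1 f2 h2
    rw [← map_add]
    refine bcRieszContentAux_le Λ' ?_
    rintro x (hx | hx)
    · exact le_add_right (h1 x hx)
    · exact le_add_left (h2 x hx)
  have step : ∀ f2 : X →ᵇ ℝ≥0, (∀ x ∈ K2, (1 : ℝ≥0) ≤ f2 x) →
      bcRieszContentAux Λ' (K1 ⊔ K2) ≤ bcRieszContentAux Λ' K1 + Λ' f2 := by
    intro f2 h2
    rw [← tsub_le_iff_right]
    refine le_csInf (bcRieszContentAux_image_nonempty Λ' K1) ?_
    rintro b ⟨f1, h1, rfl⟩
    rw [tsub_le_iff_right]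
    exact key f1 h1 f2 h2
  rw [← tsub_le_iff_left]
  refine le_csInf (bcRieszContentAux_image_nonempty Λ' K2) ?_
  rintro b ⟨f2, h2, rfl⟩
  rw [tsub_le_iff_left]
  exact step f2 h2

end BcRiesz

end Stmt14Aux

open Stmt14Aux

/-- The Doeblin-type class `Ω_ω^C` is closed: if kernels `K_n` converge uniformly (in `W₁`) to
`K` and each `K_n` has a density in `[1/C, C]` with respect to some probability measure `λ_n`,
then `K` has a density in `[1/C, C]` with respect to some probability measure `λ`, in the sense
that `λ(E)/C ≤ K(x,E) ≤ C λ(E)` for all measurable `E`. -/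
theorem stmt14 (Λ : Type*) [MetricSpace Λ] [CompactSpace Λ]
    [MeasurableSpace Λ] [BorelSpace Λ]
    (C : ℝ) (hC : 2 ≤ C)
    (K : ℕ → Λ → Measure Λ) (Klim : Λ → Measure Λ)
    (hKprob : ∀ n x, IsProbabilityMeasure (K n x))
    (hKlimprob : ∀ x, IsProbabilityMeasure (Klim x))
    (lam : ℕ → Measure Λ) (hlamprob : ∀ n, IsProbabilityMeasure (lam n))
    (hdens : ∀ n (x : Λ) (E : Set Λ), MeasurableSet E →
      lam n E / ENNReal.ofReal C ≤ K n x E ∧ K n x E ≤ ENNReal.ofReal C * lam n E)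
    (hconv : Tendsto (fun n => ⨆ x : Λ, W1 (K n x) (Klim x)) atTop (nhds 0)) :
    ∃ lam0 : Measure Λ, IsProbabilityMeasure lam0 ∧
      ∀ (x : Λ) (E : Set Λ), MeasurableSet E →
        lam0 E / ENNReal.ofReal C ≤ Klim x E ∧ Klim x E ≤ ENNReal.ofReal C * lam0 E := by
  classical
  haveI : ∀ n, IsProbabilityMeasure (lam n) := hlamprob
  haveI : ∀ x, IsProbabilityMeasure (Klim x) := hKlimprob
  haveI : ∀ n x, IsProbabilityMeasure (K n x) := hKprob
  have hne : Nonempty Λ := by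
    by_contra h
    rw [not_nonempty_iff] at h
    have h1 : (lam 0) Set.univ = 1 := measure_univ
    rw [Set.univ_eq_empty_iff.mpr h, measure_empty] at h1
    exact zero_ne_one h1
  haveI := hne
  -- basic facts about `C`
  have hCpos : (0:ℝ) < C := by linarith
  have hCne0 : ENNReal.ofReal C ≠ 0 := (ENNReal.ofReal_pos.mpr hCpos).ne'
  have hCnetop : ENNReal.ofReal C ≠ ⊤ := ENNReal.ofReal_ne_top
  have herr : ∀ δ : ℝ, 0 < δ →
      (ENNReal.ofReal δ)⁻¹ * ENNReal.ofReal (δ * δ) = ENNReal.ofReal δ := by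
    intro δ hδ
    rw [ENNReal.ofReal_mul hδ.le, ← mul_assoc,
      ENNReal.inv_mul_cancel (ENNReal.ofReal_pos.mpr hδ).ne' ENNReal.ofReal_ne_top, one_mul]
  have hlamle : ∀ n (x : Λ) (E : Set Λ), MeasurableSet E →
      lam n E ≤ ENNReal.ofReal C * K n x E := by
    intro n x E hE
    have h := (hdens n x E hE).1
    rw [ENNReal.div_le_iff_le_mul (Or.inl hCne0) (Or.inl hCnetop)] at h
    rwa [mul_comm] at h
  -- eventual uniform W1 bounds
  have hbdd : ∀ n, BddAbove (Set.range fun x => W1 (K n x) (Klim x)) := by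
    intro n
    refine ⟨Metric.diam (Set.univ : Set Λ), ?_⟩
    rintro _ ⟨x, rfl⟩
    exact W1_le_diam _ _
  have hW1ev : ∀ η : ℝ, 0 < η → ∀ᶠ n in atTop, ∀ x, W1 (K n x) (Klim x) < η := by
    intro η hη
    have h1 : ∀ᶠ n in atTop, (⨆ x, W1 (K n x) (Klim x)) < η := hconv.eventually_lt_const hη
    filter_upwards [h1] with n hn x
    exact lt_of_le_of_lt (le_ciSup (hbdd n) x) hn
  -- the limit functional along a subsequence
  obtain ⟨φ, hφ, I, hI⟩ := exists_limit_functional (Ω := Λ) lam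
  have hW1evφ : ∀ η : ℝ, 0 < η → ∀ᶠ m in atTop, ∀ x, W1 (K (φ m) x) (Klim x) < η :=
    fun η hη => hφ.tendsto_atTop.eventually (hW1ev η hη)
  -- properties of the limit functional
  have hIfin : ∀ f, I f ≠ ⊤ := by
    intro f
    refine ne_top_of_le_ne_top (ENNReal.coe_ne_top (r := nndist 0 f)) ?_
    exact le_of_tendsto (hI f) (Eventually.of_forall fun m => lintegral_le_nnnorm _ f)
  have hImono : ∀ f g : Λ →ᵇ ℝ≥0, (∀ y, f y ≤ g y) → I f ≤ I g := by
    intro f g h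
    refine le_of_tendsto_of_tendsto (hI f) (hI g) (Eventually.of_forall fun m => ?_)
    exact lintegral_mono fun y => ENNReal.coe_le_coe.mpr (h y)
  have hIadd : ∀ f g : Λ →ᵇ ℝ≥0, I (f + g) = I f + I g := by
    intro f g
    have heq : (fun m => ∫⁻ y, (((f + g) y : ℝ≥0) : ℝ≥0∞) ∂ lam (φ m))
        = fun m => (∫⁻ y, ((f y : ℝ≥0) : ℝ≥0∞) ∂ lam (φ m))
          + ∫⁻ y, ((g y : ℝ≥0) : ℝ≥0∞) ∂ lam (φ m) := by
      funext m
      simp_rw [BoundedContinuousFunction.add_apply, ENNReal.coe_add]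
      exact lintegral_add_left f.measurable_coe_ennreal_comp _
    have h2 := hI (f + g)
    rw [heq] at h2
    exact tendsto_nhds_unique h2 (((hI f).add (hI g)))
  have hIsmul : ∀ (c : ℝ≥0) (f : Λ →ᵇ ℝ≥0), I (c • f) = (c : ℝ≥0∞) * I f := by
    intro c f
    have heq : (fun m => ∫⁻ y, (((c • f) y : ℝ≥0) : ℝ≥0∞) ∂ lam (φ m))
        = fun m => (c : ℝ≥0∞) * ∫⁻ y, ((f y : ℝ≥0) : ℝ≥0∞) ∂ lam (φ m) := by
      funext m
      have : ∀ y : Λ, (((c • f) y : ℝ≥0) : ℝ≥0∞) = (c : ℝ≥0∞) * ((f y : ℝ≥0) : ℝ≥0∞) := fun y => by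
        rw [show (c • f) y = c * f y from rfl, ENNReal.coe_mul]
      simp_rw [this]
      exact lintegral_const_mul _ f.measurable_coe_ennreal_comp
    have h2 := hI (c • f)
    rw [heq] at h2
    exact tendsto_nhds_unique h2 (ENNReal.Tendsto.const_mul (hI f) (Or.inr ENNReal.coe_ne_top))
  have hIone : I 1 = 1 := by
    have heq : (fun m => ∫⁻ y, (((1 : Λ →ᵇ ℝ≥0) y : ℝ≥0) : ℝ≥0∞) ∂ lam (φ m))
        = fun _ => (1 : ℝ≥0∞) := by
      funext m
      haveI := hlamprob (φ m)
      simp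
    have h2 := hI 1
    rw [heq] at h2
    exact tendsto_nhds_unique h2 tendsto_const_nhds
  -- bundle as a positive linear functional
  let Ilin : (Λ →ᵇ ℝ≥0) →ₗ[ℝ≥0] ℝ≥0 :=
    { toFun := fun f => (I f).toNNReal
      map_add' := fun f g => by
        show (I (f + g)).toNNReal = (I f).toNNReal + (I g).toNNReal
        rw [hIadd f g, ENNReal.toNNReal_add (hIfin f) (hIfin g)]
      map_smul' := fun c f => by
        show (I (c • f)).toNNReal = c • (I f).toNNReal
        rw [hIsmul c f, ENNReal.toNNReal_mul, ENNReal.toNNReal_coe, smul_eq_mul] }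
  have hcoeI : ∀ f, ((Ilin f : ℝ≥0) : ℝ≥0∞) = I f := fun f => ENNReal.coe_toNNReal (hIfin f)
  have hIlinmono : ∀ f g : Λ →ᵇ ℝ≥0, (∀ y, f y ≤ g y) → Ilin f ≤ Ilin g := by
    intro f g h
    have := hImono f g h
    rw [← hcoeI f, ← hcoeI g] at this
    exact_mod_cast this
  -- the content and its measure
  let cont : Content Λ :=
    { toFun := bcRieszContentAux Ilin
      mono' := fun K₁ K₂ h => bcRieszContentAux_mono Ilin h
      sup_le' := bcRieszContentAux_sup_le Ilin
      sup_disjoint' := by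
        intro K₁ K₂ hdisj _ _
        refine le_antisymm (bcRieszContentAux_sup_le Ilin K₁ K₂) ?_
        refine le_csInf (bcRieszContentAux_image_nonempty Ilin (K₁ ⊔ K₂)) ?_
        rintro b ⟨f, hf, rfl⟩
        obtain ⟨δ, hδ, hdisj2⟩ := hdisj.exists_thickenings K₁.2 K₂.2.isClosed
        set g₁ : Λ →ᵇ ℝ≥0 := mkOfCompact
          ⟨fun y => min (f y) (thickenedIndicator hδ (K₁ : Set Λ) y),
            f.continuous.min (thickenedIndicator hδ (K₁ : Set Λ)).continuous⟩ with hg₁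
        set g₂ : Λ →ᵇ ℝ≥0 := mkOfCompact
          ⟨fun y => min (f y) (thickenedIndicator hδ (K₂ : Set Λ) y),
            f.continuous.min (thickenedIndicator hδ (K₂ : Set Λ)).continuous⟩ with hg₂
        have hK₁ : bcRieszContentAux Ilin K₁ ≤ Ilin g₁ := by
          refine bcRieszContentAux_le Ilin fun y hy => ?_
          refine le_min (hf y ?_) ?_
          · exact Set.mem_union_left _ hy
          · rw [thickenedIndicator_one hδ _ hy]
        have hK₂ : bcRieszContentAux Ilin K₂ ≤ Ilin g₂ := by
          refine bcRieszContentAux_le Ilin fun y hy => ?_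
          refine le_min (hf y ?_) ?_
          · exact Set.mem_union_right _ hy
          · rw [thickenedIndicator_one hδ _ hy]
        have hsum : ∀ y, g₁ y + g₂ y ≤ f y := by
          intro y
          by_cases hy1 : y ∈ thickening δ (K₁ : Set Λ)
          · have hy2 : y ∉ thickening δ (K₂ : Set Λ) := fun hy2 =>
              (Set.disjoint_left.mp hdisj2 hy1) hy2
            have h0 : g₂ y = 0 := by
              show min (f y) (thickenedIndicator hδ (K₂ : Set Λ) y) = 0
              rw [thickenedIndicator_zero hδ _ hy2]
              exact min_eq_right (zero_le)
            rw [h0, add_zero]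
            exact min_le_left _ _
          · have h0 : g₁ y = 0 := by
              show min (f y) (thickenedIndicator hδ (K₁ : Set Λ) y) = 0
              rw [thickenedIndicator_zero hδ _ hy1]
              exact min_eq_right (zero_le)
            rw [h0, zero_add]
            exact min_le_left _ _
        calc bcRieszContentAux Ilin K₁ + bcRieszContentAux Ilin K₂ ≤ Ilin g₁ + Ilin g₂ :=
              add_le_add hK₁ hK₂
          _ = Ilin (g₁ + g₂) := (map_add Ilin g₁ g₂).symm
          _ ≤ Ilin f := hIlinmono _ _ fun y => by
              simpa using hsum y }
  set ν : Measure Λ := cont.measure with hν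
  -- bridging lemmas between the functional, the content and the measure
  have hB1 : ∀ (Kc : Compacts Λ) (f : Λ →ᵇ ℝ≥0), (∀ y ∈ (Kc : Set Λ), 1 ≤ f y) →
      (cont Kc : ℝ≥0∞) ≤ I f := by
    intro Kc f hf
    have h1 : bcRieszContentAux Ilin Kc ≤ Ilin f := bcRieszContentAux_le Ilin hf
    calc (cont Kc : ℝ≥0∞) = ((bcRieszContentAux Ilin Kc : ℝ≥0) : ℝ≥0∞) := rfl
      _ ≤ ((Ilin f : ℝ≥0) : ℝ≥0∞) := ENNReal.coe_le_coe.mpr h1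
      _ = I f := hcoeI f
  have hB2 : ∀ (Kc : Compacts Λ) (f : Λ →ᵇ ℝ≥0), (∀ y, f y ≤ 1) →
      (∀ y, y ∉ (Kc : Set Λ) → f y = 0) → I f ≤ (cont Kc : ℝ≥0∞) := by
    intro Kc f hf1 hf0
    rw [← hcoeI f]
    refine ENNReal.coe_le_coe.mpr ?_
    refine le_csInf (bcRieszContentAux_image_nonempty Ilin Kc) ?_
    rintro b ⟨f', hf', rfl⟩
    refine hIlinmono _ _ fun y => ?_
    by_cases hy : y ∈ (Kc : Set Λ)
    · exact le_trans (hf1 y) (hf' y hy)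
    · rw [hf0 y hy]; exact zero_le
  have hKU : ∀ (Kc : Compacts Λ) (U : Set Λ) (hU : IsOpen U), (Kc : Set Λ) ⊆ U →
      (cont Kc : ℝ≥0∞) ≤ ν U := by
    intro Kc U hU hsub
    rw [hν, cont.measure_apply hU.measurableSet, cont.outerMeasure_of_isOpen U hU]
    exact cont.le_innerContent Kc ⟨U, hU⟩ hsub
  have hνopen : ∀ (U : Set Λ) (hU : IsOpen U),
      ν U = ⨆ (Kc : Compacts Λ) (_ : (Kc : Set Λ) ⊆ U), (cont Kc : ℝ≥0∞) := by
    intro U hU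
    rw [hν, cont.measure_apply hU.measurableSet, cont.outerMeasure_of_isOpen U hU]
    rfl
  -- ν is a probability measure
  have hcu : bcRieszContentAux Ilin ⟨Set.univ, isCompact_univ⟩ = 1 := by
    refine le_antisymm ?_ ?_
    · have h1 : bcRieszContentAux Ilin ⟨Set.univ, isCompact_univ⟩ ≤ Ilin 1 :=
        bcRieszContentAux_le Ilin fun y _ => le_refl _
      have h2 : Ilin 1 = 1 := by
        have : ((Ilin 1 : ℝ≥0) : ℝ≥0∞) = 1 := by rw [hcoeI 1, hIone]
        exact_mod_cast this
      rwa [h2] at h1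
    · refine le_csInf (bcRieszContentAux_image_nonempty Ilin _) ?_
      rintro b ⟨f, hf, rfl⟩
      have h1 : Ilin 1 ≤ Ilin f := hIlinmono _ _ fun y => by simpa using hf y trivial
      have h2 : Ilin 1 = 1 := by
        have : ((Ilin 1 : ℝ≥0) : ℝ≥0∞) = 1 := by rw [hcoeI 1, hIone]
        exact_mod_cast this
      rwa [h2] at h1
  have hν1 : ν Set.univ = 1 := by
    rw [hνopen Set.univ isOpen_univ]
    refine le_antisymm ?_ ?_
    · refine iSup₂_le fun Kc _ => ?_
      have := cont.mono Kc ⟨Set.univ, isCompact_univ⟩ (Set.subset_univ _)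
      calc (cont Kc : ℝ≥0∞) ≤ (cont ⟨Set.univ, isCompact_univ⟩ : ℝ≥0∞) := this
        _ = 1 := by
          show ((bcRieszContentAux Ilin ⟨Set.univ, isCompact_univ⟩ : ℝ≥0) : ℝ≥0∞) = 1
          rw [hcu]; rfl
    · have h1 : (1 : ℝ≥0∞) = (cont ⟨Set.univ, isCompact_univ⟩ : ℝ≥0∞) := by
        show (1 : ℝ≥0∞) = ((bcRieszContentAux Ilin ⟨Set.univ, isCompact_univ⟩ : ℝ≥0) : ℝ≥0∞)
        rw [hcu]; rfl
      rw [h1]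
      exact le_iSup₂ (f := fun (Kc : Compacts Λ) (_ : (Kc : Set Λ) ⊆ Set.univ) =>
        (cont Kc : ℝ≥0∞)) ⟨Set.univ, isCompact_univ⟩ (Set.subset_univ _)
  haveI hνprob : IsProbabilityMeasure ν := ⟨hν1⟩
  -- limits of thickened measures
  have hcthlim : ∀ (μ : Measure Λ) (_ : IsFiniteMeasure μ) (F : Set Λ), IsClosed F →
      Tendsto (fun ε : ℝ => μ (cthickening (3*ε) F)) (nhdsWithin 0 (Set.Ioi 0)) (𝓝 (μ F)) := by
    intro μ hfin F hF
    have h1 : Tendsto (fun ε : ℝ => (3*ε)) (nhdsWithin 0 (Set.Ioi 0)) (𝓝 0) := by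
      have h2 : Tendsto (fun ε : ℝ => (3*ε)) (𝓝 0) (𝓝 0) := by
        have := (continuous_mul_left (3:ℝ)).tendsto 0
        simpa using this
      exact h2.mono_left nhdsWithin_le_nhds
    exact (tendsto_measure_cthickening_of_isClosed
      ⟨1, one_pos, measure_ne_top _ _⟩ hF).comp h1
  have hofReal0 : Tendsto (fun ε : ℝ => ENNReal.ofReal ε) (nhdsWithin 0 (Set.Ioi 0)) (𝓝 0) := by
    have h5 : Tendsto (fun ε : ℝ => ENNReal.ofReal ε) (𝓝 0) (𝓝 (ENNReal.ofReal 0)) :=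
      ENNReal.continuous_ofReal.tendsto 0
    rw [ENNReal.ofReal_zero] at h5
    exact h5.mono_left nhdsWithin_le_nhds
  -- the two key inequalities on closed sets
  have hupper : ∀ (x : Λ) (F : Set Λ), IsClosed F → Klim x F ≤ ENNReal.ofReal C * ν F := by
    intro x F hF
    have htends : Tendsto
        (fun ε : ℝ => ENNReal.ofReal C * ν (cthickening (3*ε) F) + ENNReal.ofReal ε)
        (nhdsWithin 0 (Set.Ioi 0)) (𝓝 (ENNReal.ofReal C * ν F)) := by
      have h3 := ENNReal.Tendsto.const_mul (hcthlim ν inferInstance F hF)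
        (Or.inr hCnetop)
      have h6 := h3.add hofReal0
      simpa using h6
    refine ge_of_tendsto htends ?_
    filter_upwards [self_mem_nhdsWithin] with ε hεm
    have hε : (0:ℝ) < ε := hεm
    have hev : ∀ᶠ m in atTop, Klim x F ≤
        ENNReal.ofReal C * (∫⁻ y, ((thickenedIndicator hε (thickening ε F)) y : ℝ≥0∞)
          ∂ lam (φ m)) + ENNReal.ofReal ε := by
      filter_upwards [hW1evφ (ε*ε) (mul_pos hε hε)] with m hm
      have hcoup := (lintegral_le_of_W1_lt (μ := K (φ m) x) (ν := Klim x) (hm x)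
        (continuous_thickenedIndicatorAux hε F).measurable
        (fun a b => thAux_lip F a b)).2
      calc Klim x F ≤ ∫⁻ y, thickenedIndicatorAux ε F y ∂ Klim x :=
            measure_le_lintegral_thAux _ _ hF.measurableSet
        _ ≤ (∫⁻ y, thickenedIndicatorAux ε F y ∂ K (φ m) x)
              + (ENNReal.ofReal ε)⁻¹ * ENNReal.ofReal (ε*ε) := hcoup
        _ = (∫⁻ y, thickenedIndicatorAux ε F y ∂ K (φ m) x) + ENNReal.ofReal ε := by
            rw [herr ε hε]
        _ ≤ K (φ m) x (thickening ε F) + ENNReal.ofReal ε :=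
            add_le_add_left (lintegral_thAux_le_measure _ hε F) _
        _ ≤ ENNReal.ofReal C * lam (φ m) (thickening ε F) + ENNReal.ofReal ε :=
            add_le_add_left (hdens (φ m) x _ isOpen_thickening.measurableSet).2 _
        _ ≤ ENNReal.ofReal C * (∫⁻ y, thickenedIndicatorAux ε (thickening ε F) y ∂ lam (φ m))
              + ENNReal.ofReal ε :=
            add_le_add_left (mul_le_mul_right
              (measure_le_lintegral_thAux _ _ isOpen_thickening.measurableSet) _) _
        _ = ENNReal.ofReal C * (∫⁻ y, ((thickenedIndicator hε (thickening ε F)) y : ℝ≥0∞)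
              ∂ lam (φ m)) + ENNReal.ofReal ε := by
            congr 2
            exact lintegral_congr fun y => (coe_thickenedIndicator hε _ y).symm
    have hlim : Klim x F ≤
        ENNReal.ofReal C * I (thickenedIndicator hε (thickening ε F)) + ENNReal.ofReal ε := by
      refine ge_of_tendsto ?_ hev
      exact (ENNReal.Tendsto.const_mul (hI _) (Or.inr hCnetop)).add tendsto_const_nhds
    have hC2 : I (thickenedIndicator hε (thickening ε F)) ≤
        (cont ⟨cthickening (ε+ε) F, isClosed_cthickening.isCompact⟩ : ℝ≥0∞) := by
      refine hB2 _ _ (fun y => thickenedIndicator_le_one hε _ y) (fun y hy => ?_)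
      refine thickenedIndicator_zero hε _ fun hmem => ?_
      exact hy (thickening_subset_cthickening _ _ (thickening_thickening_subset ε ε F hmem))
    have hD : (cont ⟨cthickening (ε+ε) F, isClosed_cthickening.isCompact⟩ : ℝ≥0∞) ≤
        ν (cthickening (3*ε) F) := by
      have hsub : cthickening (ε+ε) F ⊆ thickening (3*ε) F :=
        cthickening_subset_thickening' (by linarith) (by linarith) F
      calc (cont ⟨cthickening (ε+ε) F, isClosed_cthickening.isCompact⟩ : ℝ≥0∞)
          ≤ ν (thickening (3*ε) F) := hKU _ _ isOpen_thickening hsub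
        _ ≤ ν (cthickening (3*ε) F) := measure_mono (thickening_subset_cthickening _ _)
    calc Klim x F ≤ ENNReal.ofReal C * I (thickenedIndicator hε (thickening ε F))
          + ENNReal.ofReal ε := hlim
      _ ≤ ENNReal.ofReal C * ν (cthickening (3*ε) F) + ENNReal.ofReal ε :=
          add_le_add_left (mul_le_mul_right (hC2.trans hD) _) _
  have hlower : ∀ (x : Λ) (F : Set Λ), IsClosed F → ν F ≤ ENNReal.ofReal C * Klim x F := by
    intro x F hF
    have htends : Tendsto
        (fun ε : ℝ => ENNReal.ofReal C * Klim x (cthickening (3*ε) F)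
          + ENNReal.ofReal C * ENNReal.ofReal ε)
        (nhdsWithin 0 (Set.Ioi 0)) (𝓝 (ENNReal.ofReal C * Klim x F)) := by
      have h3 := ENNReal.Tendsto.const_mul (hcthlim (Klim x) inferInstance F hF)
        (Or.inr hCnetop)
      have h4 := ENNReal.Tendsto.const_mul (a := ENNReal.ofReal C) hofReal0 (Or.inr hCnetop)
      have h6 := h3.add h4
      simpa using h6
    refine ge_of_tendsto htends ?_
    filter_upwards [self_mem_nhdsWithin] with ε hεm
    have hε : (0:ℝ) < ε := hεm
    have hsup : ν F ≤ ⨆ (Kc : Compacts Λ) (_ : (Kc : Set Λ) ⊆ thickening ε F),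
        (cont Kc : ℝ≥0∞) := by
      calc ν F ≤ ν (thickening ε F) := measure_mono (self_subset_thickening hε F)
        _ = _ := hνopen _ isOpen_thickening
    refine hsup.trans (iSup₂_le fun Kc hKc => ?_)
    have h1 : (cont Kc : ℝ≥0∞) ≤ I (thickenedIndicator hε (Kc : Set Λ)) :=
      hB1 _ _ (fun y hy => (thickenedIndicator_one hε _ hy).ge)
    refine h1.trans ?_
    refine le_of_tendsto (hI _) ?_
    filter_upwards [hW1evφ (ε*ε) (mul_pos hε hε)] with m hm
    have hcoup := (lintegral_le_of_W1_lt (μ := K (φ m) x) (ν := Klim x) (hm x)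
      (continuous_thickenedIndicatorAux hε (thickening ε (Kc : Set Λ))).measurable
      (fun a b => thAux_lip (thickening ε (Kc : Set Λ)) a b)).1
    have hchain : thickening ε (thickening ε (Kc : Set Λ)) ⊆ cthickening (3*ε) F := by
      refine Set.Subset.trans (thickening_thickening_subset ε ε _) ?_
      refine Set.Subset.trans (thickening_subset_of_subset _ hKc) ?_
      refine Set.Subset.trans (thickening_thickening_subset _ ε F) ?_
      rw [show ε + ε + ε = 3*ε by ring]
      exact thickening_subset_cthickening _ _
    calc ∫⁻ y, ((thickenedIndicator hε (Kc : Set Λ)) y : ℝ≥0∞) ∂ lam (φ m)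
        = ∫⁻ y, thickenedIndicatorAux ε (Kc : Set Λ) y ∂ lam (φ m) :=
          lintegral_congr fun y => coe_thickenedIndicator hε _ y
      _ ≤ lam (φ m) (thickening ε (Kc : Set Λ)) := lintegral_thAux_le_measure _ hε _
      _ ≤ ENNReal.ofReal C * K (φ m) x (thickening ε (Kc : Set Λ)) :=
          hlamle (φ m) x _ isOpen_thickening.measurableSet
      _ ≤ ENNReal.ofReal C * ∫⁻ y, thickenedIndicatorAux ε (thickening ε (Kc : Set Λ)) y
            ∂ K (φ m) x :=
          mul_le_mul_right (measure_le_lintegral_thAux _ _ isOpen_thickening.measurableSet) _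
      _ ≤ ENNReal.ofReal C * ((∫⁻ y, thickenedIndicatorAux ε (thickening ε (Kc : Set Λ)) y
            ∂ Klim x) + (ENNReal.ofReal ε)⁻¹ * ENNReal.ofReal (ε*ε)) :=
          mul_le_mul_right hcoup _
      _ = ENNReal.ofReal C * ((∫⁻ y, thickenedIndicatorAux ε (thickening ε (Kc : Set Λ)) y
            ∂ Klim x) + ENNReal.ofReal ε) := by rw [herr ε hε]
      _ ≤ ENNReal.ofReal C * (Klim x (cthickening (3*ε) F) + ENNReal.ofReal ε) := by
          refine mul_le_mul_right (add_le_add_left ?_ _) _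
          calc ∫⁻ y, thickenedIndicatorAux ε (thickening ε (Kc : Set Λ)) y ∂ Klim x
              ≤ Klim x (thickening ε (thickening ε (Kc : Set Λ))) :=
                lintegral_thAux_le_measure _ hε _
            _ ≤ Klim x (cthickening (3*ε) F) := measure_mono hchain
      _ = ENNReal.ofReal C * Klim x (cthickening (3*ε) F)
            + ENNReal.ofReal C * ENNReal.ofReal ε := mul_add _ _ _
  -- conclusion: extend to all measurable sets by regularity
  refine ⟨ν, hνprob, fun x E hE => ?_⟩
  constructor
  · rw [ENNReal.div_le_iff_le_mul (Or.inl hCne0) (Or.inl hCnetop)]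
    refine ENNReal.le_of_forall_pos_le_add fun η hη _hfin => ?_
    have hη' : ((η : ℝ≥0∞) / ENNReal.ofReal C) ≠ 0 := by
      simp only [ne_eq, ENNReal.div_eq_zero_iff, not_or]
      exact ⟨by exact_mod_cast hη.ne', hCnetop⟩
    obtain ⟨U, hEU, hUopen, hU⟩ := Set.exists_isOpen_lt_add E (measure_ne_top (Klim x) E) hη'
    have h2 : ν U ≤ ENNReal.ofReal C * Klim x U := by
      rw [hUopen.measure_eq_iSup_isClosed]
      refine iSup₂_le fun F hFU => iSup_le fun hFcl => ?_
      exact (hlower x F hFcl).trans (mul_le_mul_right (measure_mono hFU) _)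
    calc ν E ≤ ν U := measure_mono hEU
      _ ≤ ENNReal.ofReal C * Klim x U := h2
      _ ≤ ENNReal.ofReal C * (Klim x E + (η : ℝ≥0∞) / ENNReal.ofReal C) :=
          mul_le_mul_right hU.le _
      _ = ENNReal.ofReal C * Klim x E
            + ENNReal.ofReal C * ((η : ℝ≥0∞) / ENNReal.ofReal C) := mul_add _ _ _
      _ = Klim x E * ENNReal.ofReal C + (η : ℝ≥0∞) := by
          rw [ENNReal.mul_div_cancel hCne0 hCnetop, mul_comm]
  · refine ENNReal.le_of_forall_pos_le_add fun η hη _hfin => ?_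
    have hη' : ((η : ℝ≥0∞) / ENNReal.ofReal C) ≠ 0 := by
      simp only [ne_eq, ENNReal.div_eq_zero_iff, not_or]
      exact ⟨by exact_mod_cast hη.ne', hCnetop⟩
    obtain ⟨U, hEU, hUopen, hU⟩ := Set.exists_isOpen_lt_add E (measure_ne_top ν E) hη'
    have h2 : Klim x U ≤ ENNReal.ofReal C * ν U := by
      rw [hUopen.measure_eq_iSup_isClosed]
      refine iSup₂_le fun F hFU => iSup_le fun hFcl => ?_
      exact (hupper x F hFcl).trans (mul_le_mul_right (measure_mono hFU) _)
    calc Klim x E ≤ Klim x U := measure_mono hEU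
      _ ≤ ENNReal.ofReal C * ν U := h2
      _ ≤ ENNReal.ofReal C * (ν E + (η : ℝ≥0∞) / ENNReal.ofReal C) := mul_le_mul_right hU.le _
      _ = ENNReal.ofReal C * ν E
            + ENNReal.ofReal C * ((η : ℝ≥0∞) / ENNReal.ofReal C) := mul_add _ _ _
      _ = ENNReal.ofReal C * ν E + (η : ℝ≥0∞) := by
          rw [ENNReal.mul_div_cancel hCne0 hCnetop]
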